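/- In a bounded dually weakly orthomodular lattice with greatest element 1, defining x → y := (x ∨ y)' ∨ y, we have: x → 0 = x', x → 1 = 1, 1 → x = x, and x → y = 1 implies x ≤ y. -/
import Mathlib

/-- In a bounded dually weakly orthomodular lattice with x → y := (x ⊔ y)' ⊔ y:
x → 0 = x', x → 1 = 1, 1 → x = x, and x → y = 1 implies x ≤ y. -/
theorem stmt_13 {L : Type*} [Lattice L] [BoundedOrder L] (f : L → L)
    (dwom : ∀ x y : L, (x ⊔ y) ⊓ (x ⊔ f (x ⊔ y)) = x)
    (impl : L → L → L) (himpl : ∀ x y : L, impl x y = f (x ⊔ y) ⊔ y) :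
    (∀ x : L, impl x ⊥ = f x) ∧
    (∀ x : L, impl x ⊤ = ⊤) ∧
    (∀ x : L, impl ⊤ x = x) ∧
    (∀ x y : L, impl x y = ⊤ → x ≤ y) := by
  have hftop : f ⊤ = ⊥ := by
    have := dwom ⊥ ⊤
    simpa using this
  refine ⟨fun x => by simp [himpl], fun x => by simp [himpl],
    fun x => by simp [himpl, hftop], fun x y h => ?_⟩
  rw [himpl] at h
  have h2 := dwom y x
  rw [sup_comm y x] at h2
  have : y = (x ⊔ y) ⊓ (y ⊔ f (x ⊔ y)) := h2.symm
  rw [sup_comm y (f (x ⊔ y)), h, inf_top_eq] at this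
  exact this ▸ le_sup_left
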